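/- If aux lt fds holds, then for every ERead event on fd with successful result occurring at position i in lt, there exists a later position j > i at which an EWrite event on fd occurs (every request in the trace eventually gets a response). -/

import Mathlib

inductive Ev : Type
  | readOk (fd : ℕ)
  | readErr (fd : ℕ)
  | write (fd : ℕ)
  | other

def aux : List Ev → List ℕ → Prop
  | [], fds => fds = []
  | .readOk fd :: tl, fds => aux tl (fd :: fds)
  | .write fd :: tl, fds => aux tl (fds.filter (fun fd' => decide (fd ≠ fd')))
  | _ :: tl, fds => aux tl fds

def everyRequestGetsAResponse (lt : List Ev) : Prop := aux lt []

lemma pending_gets_write (lt : List Ev) (fds : List ℕ) (h : aux lt fds)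
    (fd : ℕ) (hmem : fd ∈ fds) :
    ∃ (j : ℕ) (hj : j < lt.length), lt.get ⟨j, hj⟩ = Ev.write fd := by
  induction lt generalizing fds with
  | nil => simp [aux] at h; simp [h] at hmem
  | cons hd tl ih =>
    cases hd with
    | readOk fd' =>
      obtain ⟨j, hj, hget⟩ := ih _ h (List.mem_cons_of_mem _ hmem)
      exact ⟨j + 1, by simpa using Nat.succ_lt_succ hj, hget⟩
    | readErr fd' =>
      obtain ⟨j, hj, hget⟩ := ih _ h hmem
      exact ⟨j + 1, by simpa using Nat.succ_lt_succ hj, hget⟩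
    | other =>
      obtain ⟨j, hj, hget⟩ := ih _ h hmem
      exact ⟨j + 1, by simpa using Nat.succ_lt_succ hj, hget⟩
    | write fd' =>
      by_cases hfd : fd' = fd
      · exact ⟨0, by simp, by simp [hfd]⟩
      · have : fd ∈ fds.filter (fun x => decide (fd' ≠ x)) := by
          simp [List.mem_filter, hmem, hfd]
        obtain ⟨j, hj, hget⟩ := ih _ h this
        exact ⟨j + 1, by simpa using Nat.succ_lt_succ hj, hget⟩

/-- Every successful read in the trace is eventually followed by a write to
the same file descriptor. -/
theorem every_request_gets_eventual_response
    (lt : List Ev) (fds : List ℕ) (h : aux lt fds) :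
    ∀ (i : ℕ) (hi : i < lt.length) (fd : ℕ),
      lt.get ⟨i, hi⟩ = Ev.readOk fd →
      ∃ (j : ℕ) (hj : j < lt.length), i < j ∧ lt.get ⟨j, hj⟩ = Ev.write fd := by
  induction lt generalizing fds with
  | nil => intro i hi; simp at hi
  | cons hd tl ih =>
    intro i hi fd hget
    cases i with
    | zero =>
      simp at hget
      subst hget
      obtain ⟨j, hj, hg⟩ := pending_gets_write tl _ h fd List.mem_cons_self
      exact ⟨j + 1, by simpa using Nat.succ_lt_succ hj, Nat.succ_pos _, hg⟩
    | succ i =>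
      simp at hget
      have hi' : i < tl.length := Nat.lt_of_succ_lt_succ (by simpa using hi)
      have := fun fds' h' => ih fds' h' i hi' fd hget
      cases hd with
      | readOk fd' =>
        obtain ⟨j, hj, hij, hg⟩ := this _ h
        exact ⟨j + 1, by simpa using Nat.succ_lt_succ hj, Nat.succ_lt_succ hij, hg⟩
      | readErr fd' =>
        obtain ⟨j, hj, hij, hg⟩ := this _ h
        exact ⟨j + 1, by simpa using Nat.succ_lt_succ hj, Nat.succ_lt_succ hij, hg⟩
      | write fd' =>
        obtain ⟨j, hj, hij, hg⟩ := this _ h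
        exact ⟨j + 1, by simpa using Nat.succ_lt_succ hj, Nat.succ_lt_succ hij, hg⟩
      | other =>
        obtain ⟨j, hj, hij, hg⟩ := this _ h
        exact ⟨j + 1, by simpa using Nat.succ_lt_succ hj, Nat.succ_lt_succ hij, hg⟩
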